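/- With G as above and ‖𝒜‖ ≤ ρ, for any t₁, t₂ ∈ [0,τ] with t₂ ≤ t₁ one has |G(𝒜)(t₁) - G(𝒜)(t₂)| ≤ (C_Φρ + D_Φ)/(B(θ)Γ(θ)) · (t₁^θ - t₂^θ + 2(t₁ - t₂)^θ); in particular the family {G(𝒜) : ‖𝒜‖ ≤ ρ} is equicontinuous. -/

import Mathlib

open MeasureTheory intervalIntegral

private lemma ker_intervalIntegrable {θ : ℝ} (hθ0 : 0 < θ) (s a b : ℝ) :
    IntervalIntegrable (fun ω : ℝ => (s - ω) ^ (θ - 1)) volume a b := by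
  have h : (-1 : ℝ) < θ - 1 := by linarith
  have := (intervalIntegrable_rpow' h (a := s - a) (b := s - b)).comp_sub_left s
  simpa using this

private lemma ker_integral {θ : ℝ} (hθ0 : 0 < θ) (s a b : ℝ) :
    ∫ ω in a..b, (s - ω) ^ (θ - 1) = ((s - a) ^ θ - (s - b) ^ θ) / θ := by
  have h := intervalIntegral.integral_comp_sub_left (fun x : ℝ => x ^ (θ - 1)) s
    (a := a) (b := b)
  rw [h, integral_rpow (Or.inl (by linarith))]
  norm_num

private lemma smul_intervalIntegrable {E : Type*} [NormedAddCommGroup E] [NormedSpace ℝ E]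
    {f : ℝ → E} (hf : Continuous f) {k : ℝ → ℝ} {a b : ℝ} (hab : a ≤ b)
    (hk : IntervalIntegrable k volume a b) :
    IntervalIntegrable (fun ω => k ω • f ω) volume a b := by
  rw [intervalIntegrable_iff_integrableOn_Icc_of_le hab] at hk ⊢
  exact hk.smul_continuousOn hf.continuousOn isCompact_Icc

/-- Equicontinuity estimate for the fractional integral operator `G`:
for `t₂ ≤ t₁` in `[0,τ]` and `‖𝒜‖ ≤ ρ`,
`|G(𝒜)(t₁) - G(𝒜)(t₂)| ≤ (C_Φρ+D_Φ)/(BΓ(θ)) (t₁^θ - t₂^θ + 2(t₁-t₂)^θ)`. -/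
theorem G_equicontinuous
    (τ θ B CΦ DΦ ρ : ℝ) (hτ : 0 < τ) (hθ0 : 0 < θ) (hθ1 : θ ≤ 1) (hB : 0 < B)
    (hρ : 0 ≤ ρ)
    (Φ : ℝ → EuclideanSpace ℝ (Fin 3) → EuclideanSpace ℝ (Fin 3))
    (hΦcont : Continuous fun p : ℝ × EuclideanSpace ℝ (Fin 3) => Φ p.1 p.2)
    (hΦgrowth : ∀ t ∈ Set.Icc (0 : ℝ) τ, ∀ x, ‖Φ t x‖ ≤ CΦ * ‖x‖ + DΦ)
    (G : C(Set.Icc (0:ℝ) τ, EuclideanSpace ℝ (Fin 3)) →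
         C(Set.Icc (0:ℝ) τ, EuclideanSpace ℝ (Fin 3)))
    (hG : ∀ A t, G A t =
      (θ / (B * Real.Gamma θ)) •
        ∫ ω in (0:ℝ)..(t : ℝ), ((t : ℝ) - ω) ^ (θ - 1) •
          Φ ω (Set.IccExtend hτ.le A ω)) :
    ∀ A, ‖A‖ ≤ ρ → ∀ t₁ t₂ : Set.Icc (0:ℝ) τ, (t₂ : ℝ) ≤ (t₁ : ℝ) →
      ‖G A t₁ - G A t₂‖ ≤
        (CΦ * ρ + DΦ) / (B * Real.Gamma θ) *
          ((t₁ : ℝ) ^ θ - (t₂ : ℝ) ^ θ + 2 * ((t₁ : ℝ) - (t₂ : ℝ)) ^ θ) := by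
  intro A hA t₁ t₂ ht
  have hΓ : 0 < Real.Gamma θ := Real.Gamma_pos_of_pos hθ0
  set t1 : ℝ := (t₁ : ℝ)
  set t2 : ℝ := (t₂ : ℝ)
  have ht20 : 0 ≤ t2 := t₂.2.1
  have ht10 : 0 ≤ t1 := t₁.2.1
  have ht1τ : t1 ≤ τ := t₁.2.2
  have ht2τ : t2 ≤ τ := t₂.2.2
  -- the integrand
  set f : ℝ → EuclideanSpace ℝ (Fin 3) :=
    fun ω => Φ ω (Set.IccExtend hτ.le A ω) with hfdef
  have hfc : Continuous f := by
    have hext : Continuous (Set.IccExtend hτ.le A) :=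
      A.continuous.comp continuous_projIcc
    exact hΦcont.comp (continuous_id.prodMk hext)
  -- CΦ is nonnegative
  have hCΦ0 : 0 ≤ CΦ := by
    by_contra h
    push_neg at h
    set r : ℝ := (|DΦ| + 1) / (-CΦ) with hr
    have hr0 : 0 ≤ r := div_nonneg (by positivity) (by linarith)
    set x : EuclideanSpace ℝ (Fin 3) := r • EuclideanSpace.single 0 1 with hx
    have hxnorm : ‖x‖ = r := by
      rw [hx, norm_smul, EuclideanSpace.norm_single]
      simp [abs_of_nonneg hr0]
    have h1 := hΦgrowth 0 ⟨le_refl 0, hτ.le⟩ x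
    have h2 : (0:ℝ) ≤ ‖Φ 0 x‖ := norm_nonneg _
    rw [hxnorm] at h1
    have hCne : CΦ ≠ 0 := ne_of_lt h
    have h3 : CΦ * r = -(|DΦ| + 1) := by
      rw [hr]
      field_simp
    rw [h3] at h1
    have := abs_nonneg DΦ
    have := le_abs_self DΦ
    linarith
  -- the uniform bound
  set M : ℝ := CΦ * ρ + DΦ with hM
  have hbound : ∀ ω ∈ Set.Icc (0:ℝ) τ, ‖f ω‖ ≤ M := by
    intro ω hω
    have h1 := hΦgrowth ω hω (Set.IccExtend hτ.le A ω)
    have h2 : ‖Set.IccExtend hτ.le A ω‖ ≤ ρ :=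
      le_trans (A.norm_coe_le_norm _) hA
    have : CΦ * ‖Set.IccExtend hτ.le A ω‖ ≤ CΦ * ρ :=
      mul_le_mul_of_nonneg_left h2 hCΦ0
    calc ‖f ω‖ ≤ CΦ * ‖Set.IccExtend hτ.le A ω‖ + DΦ := h1
    _ ≤ M := by rw [hM]; linarith
  have hM0 : 0 ≤ M := le_trans (norm_nonneg (f 0)) (hbound 0 ⟨le_refl 0, hτ.le⟩)
  -- kernels
  set K1 : ℝ → ℝ := fun ω => (t1 - ω) ^ (θ - 1) with hK1
  set K2 : ℝ → ℝ := fun ω => (t2 - ω) ^ (θ - 1) with hK2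
  have iK1a : IntervalIntegrable K1 volume 0 t2 := ker_intervalIntegrable hθ0 t1 0 t2
  have iK1b : IntervalIntegrable K1 volume t2 t1 := ker_intervalIntegrable hθ0 t1 t2 t1
  have iK2a : IntervalIntegrable K2 volume 0 t2 := ker_intervalIntegrable hθ0 t2 0 t2
  have i1a : IntervalIntegrable (fun ω => K1 ω • f ω) volume 0 t2 :=
    smul_intervalIntegrable hfc ht20 iK1a
  have i1b : IntervalIntegrable (fun ω => K1 ω • f ω) volume t2 t1 :=
    smul_intervalIntegrable hfc ht iK1b
  have i2a : IntervalIntegrable (fun ω => K2 ω • f ω) volume 0 t2 :=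
    smul_intervalIntegrable hfc ht20 iK2a
  have i12a : IntervalIntegrable (fun ω => (K1 ω - K2 ω) • f ω) volume 0 t2 :=
    smul_intervalIntegrable hfc ht20 (iK1a.sub iK2a)
  -- split the difference
  have hsplit : (∫ ω in (0:ℝ)..t1, K1 ω • f ω)
      = (∫ ω in (0:ℝ)..t2, K1 ω • f ω) + ∫ ω in t2..t1, K1 ω • f ω :=
    (intervalIntegral.integral_add_adjacent_intervals i1a i1b).symm
  have hdiff : (∫ ω in (0:ℝ)..t1, K1 ω • f ω) - (∫ ω in (0:ℝ)..t2, K2 ω • f ω)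
      = (∫ ω in (0:ℝ)..t2, (K1 ω - K2 ω) • f ω) + ∫ ω in t2..t1, K1 ω • f ω := by
    have hsub : (∫ ω in (0:ℝ)..t2, (K1 ω - K2 ω) • f ω)
        = (∫ ω in (0:ℝ)..t2, K1 ω • f ω) - ∫ ω in (0:ℝ)..t2, K2 ω • f ω := by
      rw [← intervalIntegral.integral_sub i1a i2a]
      congr 1
      ext ω
      rw [sub_smul]
    rw [hsplit, hsub]
    abel
  have hGeq : G A t₁ - G A t₂ = (θ / (B * Real.Gamma θ)) •
      ((∫ ω in (0:ℝ)..t2, (K1 ω - K2 ω) • f ω) + ∫ ω in t2..t1, K1 ω • f ω) := by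
    rw [hG A t₁, hG A t₂, ← smul_sub, ← hdiff]
  -- bound the first integral
  have hb1 : ‖∫ ω in (0:ℝ)..t2, (K1 ω - K2 ω) • f ω‖
      ≤ ∫ ω in (0:ℝ)..t2, (K2 ω - K1 ω) * M := by
    refine le_trans (intervalIntegral.norm_integral_le_integral_norm ht20) ?_
    refine intervalIntegral.integral_mono_ae_restrict ht20 i12a.norm
      ((iK2a.sub iK1a).mul_const M) ?_
    have hne : ∀ᵐ ω ∂volume, ω ≠ t2 := by
      rw [ae_iff]
      simp only [not_ne_iff, Set.setOf_eq_eq_singleton]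
      exact measure_singleton t2
    filter_upwards [ae_restrict_mem measurableSet_Icc, ae_restrict_of_ae hne]
      with ω hω hωne
    have hω0 : 0 ≤ ω := hω.1
    have hωlt : ω < t2 := lt_of_le_of_ne hω.2 hωne
    have h2pos : 0 < t2 - ω := by linarith
    have hle : t2 - ω ≤ t1 - ω := by linarith
    have hK1n : 0 ≤ K1 ω := Real.rpow_nonneg (by linarith) _
    have hK21 : K1 ω ≤ K2 ω :=
      Real.rpow_le_rpow_of_nonpos h2pos hle (by linarith)
    have hfω : ‖f ω‖ ≤ M := hbound ω ⟨hω0, by linarith⟩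
    rw [norm_smul, Real.norm_eq_abs,
      abs_of_nonpos (show K1 ω - K2 ω ≤ 0 by linarith), neg_sub]
    exact mul_le_mul_of_nonneg_left hfω (by linarith)
  -- bound the second integral
  have hb2 : ‖∫ ω in t2..t1, K1 ω • f ω‖ ≤ ∫ ω in t2..t1, K1 ω * M := by
    refine le_trans (intervalIntegral.norm_integral_le_integral_norm ht) ?_
    refine intervalIntegral.integral_mono_on ht i1b.norm (iK1b.mul_const M) ?_
    intro ω hω
    have hK1n : 0 ≤ K1 ω := Real.rpow_nonneg (by linarith [hω.2]) _
    have hfω : ‖f ω‖ ≤ M := hbound ω ⟨by linarith [hω.1], by linarith [hω.2]⟩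
    rw [norm_smul, Real.norm_eq_abs, abs_of_nonneg hK1n]
    exact mul_le_mul_of_nonneg_left hfω hK1n
  -- compute the bounding integrals
  have e1 : (∫ ω in (0:ℝ)..t2, (K2 ω - K1 ω) * M)
      = (t2 ^ θ - (t1 ^ θ - (t1 - t2) ^ θ)) / θ * M := by
    rw [intervalIntegral.integral_mul_const, intervalIntegral.integral_sub iK2a iK1a,
      hK1, hK2, ker_integral hθ0, ker_integral hθ0]
    rw [sub_zero, sub_zero, sub_self, Real.zero_rpow hθ0.ne']
    ring
  have e2 : (∫ ω in t2..t1, K1 ω * M) = (t1 - t2) ^ θ / θ * M := by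
    rw [intervalIntegral.integral_mul_const, hK1, ker_integral hθ0]
    rw [sub_self, Real.zero_rpow hθ0.ne']
    ring
  -- put everything together
  have hc0 : 0 ≤ θ / (B * Real.Gamma θ) := by positivity
  have hmono : t2 ^ θ ≤ t1 ^ θ := Real.rpow_le_rpow ht20 ht hθ0.le
  rw [hGeq, norm_smul, Real.norm_eq_abs, abs_of_nonneg hc0]
  have htri : ‖(∫ ω in (0:ℝ)..t2, (K1 ω - K2 ω) • f ω) + ∫ ω in t2..t1, K1 ω • f ω‖
      ≤ (t2 ^ θ - (t1 ^ θ - (t1 - t2) ^ θ)) / θ * M + (t1 - t2) ^ θ / θ * M := by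
    calc _ ≤ ‖∫ ω in (0:ℝ)..t2, (K1 ω - K2 ω) • f ω‖ + ‖∫ ω in t2..t1, K1 ω • f ω‖ :=
          norm_add_le _ _
    _ ≤ _ := by rw [← e1, ← e2]; exact add_le_add hb1 hb2
  calc θ / (B * Real.Gamma θ) *
      ‖(∫ ω in (0:ℝ)..t2, (K1 ω - K2 ω) • f ω) + ∫ ω in t2..t1, K1 ω • f ω‖
      ≤ θ / (B * Real.Gamma θ) *
        ((t2 ^ θ - (t1 ^ θ - (t1 - t2) ^ θ)) / θ * M + (t1 - t2) ^ θ / θ * M) :=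
        mul_le_mul_of_nonneg_left htri hc0
    _ = M / (B * Real.Gamma θ) * (t2 ^ θ - t1 ^ θ + 2 * (t1 - t2) ^ θ) := by
        field_simp
        ring
    _ ≤ M / (B * Real.Gamma θ) * (t1 ^ θ - t2 ^ θ + 2 * (t1 - t2) ^ θ) := by
        have hMdiv : 0 ≤ M / (B * Real.Gamma θ) := div_nonneg hM0 (by positivity)
        apply mul_le_mul_of_nonneg_left _ hMdiv
        linarith
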